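/- Let φ₁, …, φ_N ∈ ℝ^d with ‖φᵢ‖₂ ≤ 1 for all i, let λ ≥ 1, and define Λ_k = λ·I + Σ_{i<k} φᵢφᵢᵀ for each k. Then Σ_{k=1}^N sqrt(φ_kᵀ Λ_k⁻¹ φ_k) ≤ sqrt(2·N·d·log(1 + N/λ)). -/

import Mathlib

open Matrix Finset

section EPAux
variable {d : ℕ}

private lemma dot_sq_le' (u w : Fin d → ℝ) : (u ⬝ᵥ w)^2 ≤ (u ⬝ᵥ u) * (w ⬝ᵥ w) := by
  simpa [dotProduct, sq] using Finset.sum_mul_sq_le_sq_mul_sq univ u w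

private lemma vecMulVec_mulVec' (v x : Fin d → ℝ) :
    vecMulVec v v *ᵥ x = (v ⬝ᵥ x) • v := by
  ext i
  simp [vecMulVec, mulVec, dotProduct, Finset.mul_sum, mul_comm, mul_left_comm]

private lemma dot_vecMulVec_mulVec (v x : Fin d → ℝ) :
    x ⬝ᵥ (vecMulVec v v *ᵥ x) = (v ⬝ᵥ x)^2 := by
  rw [vecMulVec_mulVec', dotProduct_smul, smul_eq_mul, dotProduct_comm, sq]

private lemma psd_vecMulVec (v : Fin d → ℝ) : (vecMulVec v v).PosSemidef := by
  refine Matrix.PosSemidef.of_dotProduct_mulVec_nonneg ?_ ?_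
  · ext a b; simp [vecMulVec, conjTranspose_apply, mul_comm]
  · intro x
    rw [star_trivial, dot_vecMulVec_mulVec]
    exact sq_nonneg _

private lemma psd_sum {ι : Type*} (t : Finset ι) (f : ι → Fin d → ℝ) :
    (∑ i ∈ t, vecMulVec (f i) (f i)).PosSemidef := by
  classical
  exact Finset.sum_induction _ _ (fun a b ha hb => ha.add hb) Matrix.PosSemidef.zero
    (fun i _ => psd_vecMulVec (f i))

private lemma dot_sum_mulVec {ι : Type*} (t : Finset ι) (f : ι → Fin d → ℝ) (z : Fin d → ℝ) :
    z ⬝ᵥ ((∑ i ∈ t, vecMulVec (f i) (f i)) *ᵥ z) = ∑ i ∈ t, (f i ⬝ᵥ z)^2 := by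
  classical
  induction t using Finset.induction_on with
  | empty => simp [Matrix.zero_mulVec]
  | insert a s h ih =>
    rw [Finset.sum_insert h, Matrix.add_mulVec, dotProduct_add, Finset.sum_insert h, ih,
      dot_vecMulVec_mulVec]

private lemma dot_self_nonneg' (v : Fin d → ℝ) : 0 ≤ v ⬝ᵥ v :=
  Finset.sum_nonneg fun _ _ => mul_self_nonneg _

private lemma smul_one_posDef {c : ℝ} (hc : 0 < c) :
    (c • (1 : Matrix (Fin d) (Fin d) ℝ)).PosDef := by
  rw [smul_one_eq_diagonal]
  exact Matrix.PosDef.diagonal fun _ => hc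

private lemma smul_one_isHermitian (c : ℝ) :
    (c • (1 : Matrix (Fin d) (Fin d) ℝ)).IsHermitian := by
  rw [smul_one_eq_diagonal]
  exact isHermitian_diagonal _

private lemma le_two_mul_log {x : ℝ} (h0 : 0 ≤ x) (h1 : x ≤ 1) :
    x ≤ 2 * Real.log (1 + x) := by
  have h1x : (0:ℝ) < 1 + x := by linarith
  have h := Real.log_le_sub_one_of_pos (inv_pos.2 h1x)
  rw [Real.log_inv] at h
  have hinv : (1 + x) * (1 + x)⁻¹ = 1 := mul_inv_cancel₀ h1x.ne'
  nlinarith [mul_nonneg h0 (sub_nonneg.2 h1), inv_pos.2 h1x]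

private lemma det_step {A : Matrix (Fin d) (Fin d) ℝ} (hA : A.PosDef) (u : Fin d → ℝ) :
    (A + vecMulVec u u).det = A.det * (1 + u ⬝ᵥ (A⁻¹ *ᵥ u)) := by
  have hdet : IsUnit A.det := isUnit_iff_ne_zero.2 hA.det_pos.ne'
  rw [vecMulVec_eq Unit, Matrix.det_add_replicateCol_mul_replicateRow hdet]
  congr 1
  rw [Matrix.mul_assoc, ← Matrix.replicateCol_mulVec, det_unique]
  simp [Matrix.add_apply, Matrix.one_apply, Matrix.replicateRow_mul_replicateCol_apply]

private lemma eigenvalue_le {A : Matrix (Fin d) (Fin d) ℝ} (hA : A.IsHermitian) {c : ℝ}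
    (h : (c • (1 : Matrix (Fin d) (Fin d) ℝ) - A).PosSemidef) (j : Fin d) :
    hA.eigenvalues j ≤ c := by
  have hv := hA.mulVec_eigenvectorBasis j
  set v : Fin d → ℝ := ⇑(hA.eigenvectorBasis j) with hvdef
  have hvv : v ⬝ᵥ v = 1 := by
    have hn := hA.eigenvectorBasis.orthonormal.1 j
    have h2 : v ⬝ᵥ v = @inner ℝ _ _ (hA.eigenvectorBasis j) (hA.eigenvectorBasis j) := by
      rw [EuclideanSpace.inner_eq_star_dotProduct, star_trivial]
    rw [h2, real_inner_self_eq_norm_sq, hn]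
    norm_num
  have h2 := h.dotProduct_mulVec_nonneg v
  rw [Matrix.sub_mulVec, hv] at h2
  have h1v : (c • (1 : Matrix (Fin d) (Fin d) ℝ)) *ᵥ v = c • v := by
    rw [Matrix.smul_mulVec, Matrix.one_mulVec]
  rw [h1v, star_trivial] at h2
  have h3 : v ⬝ᵥ (c • v - hA.eigenvalues j • v) = c - hA.eigenvalues j := by
    rw [dotProduct_sub, dotProduct_smul, dotProduct_smul, hvv]
    simp
  rw [h3] at h2
  linarith

end EPAux

/-- Elliptical potential lemma: with `‖φᵢ‖₂ ≤ 1`, `λ ≥ 1` and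
    `Λ_k = λI + Σ_{i<k} φᵢφᵢᵀ`, we have
    `Σ_{k<N} √(φ_kᵀ Λ_k⁻¹ φ_k) ≤ √(2 N d log(1 + N/λ))`. -/
theorem elliptical_potential (d N : ℕ) (lam : ℝ) (hlam : 1 ≤ lam)
    (φ : Fin N → Fin d → ℝ) (hφ : ∀ i, Real.sqrt (φ i ⬝ᵥ φ i) ≤ 1)
    (Λ : Fin N → Matrix (Fin d) (Fin d) ℝ)
    (hΛ : ∀ k, Λ k = lam • (1 : Matrix (Fin d) (Fin d) ℝ) +
      ∑ i ∈ Finset.univ.filter (fun i => i < k), vecMulVec (φ i) (φ i)) :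
    ∑ k, Real.sqrt (φ k ⬝ᵥ ((Λ k)⁻¹.mulVec (φ k))) ≤
      Real.sqrt (2 * N * d * Real.log (1 + N / lam)) := by
  classical
  have hlam0 : (0:ℝ) < lam := lt_of_lt_of_le one_pos hlam
  -- φ has norm at most one
  have hφ2 : ∀ k, φ k ⬝ᵥ φ k ≤ 1 := by
    intro k
    have h0 := dot_self_nonneg' (φ k)
    nlinarith [Real.sq_sqrt h0, Real.sqrt_nonneg (φ k ⬝ᵥ φ k), hφ k]
  -- the ℕ-indexed matrices
  set S : ℕ → Matrix (Fin d) (Fin d) ℝ := fun m =>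
    ∑ i ∈ univ.filter (fun i : Fin N => (i : ℕ) < m), vecMulVec (φ i) (φ i) with hS
  set M : ℕ → Matrix (Fin d) (Fin d) ℝ := fun m => lam • 1 + S m with hMdef
  have hSapp : ∀ m, S m
      = ∑ i ∈ univ.filter (fun i : Fin N => (i : ℕ) < m), vecMulVec (φ i) (φ i) := fun _ => rfl
  have hMapp : ∀ m, M m = lam • 1 + S m := fun _ => rfl
  have hSpsd : ∀ m, (S m).PosSemidef := fun m => psd_sum _ _
  have hMpd : ∀ m, (M m).PosDef := fun m => (smul_one_posDef hlam0).add_posSemidef (hSpsd m)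
  have hdetpos : ∀ m, 0 < (M m).det := fun m => (hMpd m).det_pos
  have hΛM : ∀ k : Fin N, Λ k = M k.val := by
    intro k
    rw [hΛ, hMapp, hSapp]
    congr 1
  -- the quantity x
  set x : Fin N → ℝ := fun k => φ k ⬝ᵥ ((M k.val)⁻¹ *ᵥ φ k) with hx
  have hxapp : ∀ k, x k = φ k ⬝ᵥ ((M k.val)⁻¹ *ᵥ φ k) := fun _ => rfl
  have hgoal : (∑ k, Real.sqrt (φ k ⬝ᵥ ((Λ k)⁻¹.mulVec (φ k)))) = ∑ k, Real.sqrt (x k) := by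
    refine Finset.sum_congr rfl (fun k _ => ?_)
    rw [hΛM k, hxapp]
  have hx0 : ∀ k, 0 ≤ x k := by
    intro k
    have h := ((hMpd k.val).inv.posSemidef).dotProduct_mulVec_nonneg (φ k)
    rw [star_trivial] at h
    rw [hxapp]
    exact h
  have hx1 : ∀ k, x k ≤ 1 := by
    intro k
    set A := M k.val with hA
    set y := A⁻¹ *ᵥ φ k with hy
    have hAy : A *ᵥ y = φ k := by
      rw [hy, Matrix.mulVec_mulVec,
        Matrix.mul_nonsing_inv _ (isUnit_iff_ne_zero.2 (hMpd k.val).det_pos.ne'),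
        Matrix.one_mulVec]
    have hxk : x k = φ k ⬝ᵥ y := hxapp k
    have hyy : 0 ≤ y ⬝ᵥ y := dot_self_nonneg' y
    have hquad : lam * (y ⬝ᵥ y) ≤ x k := by
      have hSy := (hSpsd k.val).dotProduct_mulVec_nonneg y
      rw [star_trivial] at hSy
      have hxq : x k = y ⬝ᵥ (A *ᵥ y) := by rw [hxk, ← hAy, dotProduct_comm]
      rw [hxq, hA, hMapp, Matrix.add_mulVec, Matrix.smul_mulVec, Matrix.one_mulVec,
        dotProduct_add, dotProduct_smul, smul_eq_mul]
      linarith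
    have hcs : (x k)^2 ≤ y ⬝ᵥ y := by
      have h1 := dot_sq_le' (φ k) y
      rw [← hxk] at h1
      nlinarith [hφ2 k, hyy, dot_self_nonneg' (φ k)]
    nlinarith [hx0 k]
  -- determinant recursion
  have hSsucc : ∀ k : Fin N, S (k.val + 1) = S k.val + vecMulVec (φ k) (φ k) := by
    intro k
    have hfil : (univ.filter (fun i : Fin N => (i : ℕ) < k.val + 1))
        = insert k (univ.filter (fun i : Fin N => (i : ℕ) < k.val)) := by
      ext i
      simp only [Finset.mem_insert, Finset.mem_filter, Finset.mem_univ, true_and, Fin.ext_iff]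
      omega
    rw [hSapp, hSapp, hfil, Finset.sum_insert (by simp), add_comm]
  have hdetstep : ∀ k : Fin N, (M (k.val + 1)).det = (M k.val).det * (1 + x k) := by
    intro k
    have hM1 : M (k.val + 1) = M k.val + vecMulVec (φ k) (φ k) := by
      rw [hMapp, hMapp, hSsucc, add_assoc]
    rw [hM1, det_step (hMpd k.val) (φ k), hxapp]
  -- telescoping sum of logs
  have hlog : ∀ k : Fin N, Real.log (1 + x k)
      = Real.log ((M (k.val + 1)).det) - Real.log ((M k.val).det) := by
    intro k
    rw [hdetstep k, Real.log_mul (hdetpos _).ne' (by linarith [hx0 k] : (1:ℝ) + x k ≠ 0)]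
    ring
  have htel : ∑ k : Fin N, Real.log (1 + x k)
      = Real.log ((M N).det) - Real.log ((M 0).det) := by
    rw [Finset.sum_congr rfl (fun k _ => hlog k)]
    rw [Fin.sum_univ_eq_sum_range (fun m => Real.log ((M (m + 1)).det) - Real.log ((M m).det)) N]
    exact Finset.sum_range_sub (fun m => Real.log ((M m).det)) N
  -- value at 0
  have hM0 : Real.log ((M 0).det) = d * Real.log lam := by
    have h0 : M 0 = lam • (1 : Matrix (Fin d) (Fin d) ℝ) := by
      rw [hMapp, hSapp]
      simp
    rw [h0, Matrix.det_smul, Matrix.det_one, mul_one, Fintype.card_fin, Real.log_pow]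
  -- upper bound on det (M N)
  have hub : (M N).det ≤ (lam + N) ^ d := by
    have hH := (hMpd N).isHermitian
    have hpsd : ((lam + N) • (1 : Matrix (Fin d) (Fin d) ℝ) - M N).PosSemidef := by
      have hEq : (lam + N) • (1 : Matrix (Fin d) (Fin d) ℝ) - M N
          = (N : ℝ) • 1 - S N := by
        rw [hMapp, add_smul]
        abel
      rw [hEq]
      refine Matrix.PosSemidef.of_dotProduct_mulVec_nonneg ?_ ?_
      · exact (smul_one_isHermitian _).sub (hSpsd N).isHermitian
      · intro z
        rw [star_trivial, Matrix.sub_mulVec, dotProduct_sub, Matrix.smul_mulVec,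
          Matrix.one_mulVec, dotProduct_smul, smul_eq_mul]
        have hzz := dot_self_nonneg' z
        have hSz : z ⬝ᵥ (S N *ᵥ z) ≤ (N : ℝ) * (z ⬝ᵥ z) := by
          rw [hSapp, dot_sum_mulVec]
          calc ∑ i ∈ univ.filter (fun i : Fin N => (i : ℕ) < N), (φ i ⬝ᵥ z)^2
              ≤ ∑ _i ∈ univ.filter (fun i : Fin N => (i : ℕ) < N), (z ⬝ᵥ z) := by
                refine Finset.sum_le_sum (fun i _ => ?_)
                nlinarith [dot_sq_le' (φ i) z, hφ2 i, hzz, dot_self_nonneg' (φ i)]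
            _ = (univ.filter (fun i : Fin N => (i : ℕ) < N)).card * (z ⬝ᵥ z) := by
                rw [Finset.sum_const, nsmul_eq_mul]
            _ ≤ (N : ℝ) * (z ⬝ᵥ z) := by
                refine mul_le_mul_of_nonneg_right ?_ hzz
                have := Finset.card_filter_le (univ : Finset (Fin N))
                  (fun i : Fin N => (i : ℕ) < N)
                have hcard : ((univ : Finset (Fin N)).card : ℝ) = N := by simp
                exact_mod_cast le_trans (Nat.cast_le.2 this) (le_of_eq hcard)
        linarith
    have heig : ∀ j, hH.eigenvalues j ≤ lam + N := fun j => eigenvalue_le hH hpsd j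
    have heig0 : ∀ j, 0 ≤ hH.eigenvalues j := fun j => ((hMpd N).eigenvalues_pos j).le
    have hdet : (M N).det = ∏ j, hH.eigenvalues j := by
      simpa using hH.det_eq_prod_eigenvalues
    rw [hdet]
    calc ∏ j, hH.eigenvalues j ≤ ∏ _j : Fin d, (lam + N) :=
          Finset.prod_le_prod (fun j _ => heig0 j) (fun j _ => heig j)
      _ = (lam + N) ^ d := by rw [Finset.prod_const, Finset.card_univ, Fintype.card_fin]
  -- the log bound
  have hlampos : (0:ℝ) < lam + N := by positivity
  have hsumlog : ∑ k : Fin N, Real.log (1 + x k) ≤ d * Real.log (1 + N / lam) := by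
    rw [htel, hM0]
    have h1 : Real.log ((M N).det) ≤ d * Real.log (lam + N) := by
      calc Real.log ((M N).det) ≤ Real.log ((lam + N) ^ d) :=
            Real.log_le_log (hdetpos N) hub
        _ = d * Real.log (lam + N) := by rw [Real.log_pow]
    have h2 : Real.log (1 + N / lam) = Real.log (lam + N) - Real.log lam := by
      rw [show (1 + (N:ℝ) / lam) = (lam + N) / lam by field_simp,
        Real.log_div hlampos.ne' hlam0.ne']
    rw [h2]
    have hd0 : (0:ℝ) ≤ d := Nat.cast_nonneg d
    nlinarith [h1]
  -- sum bound via elementary inequality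
  have key : ∑ k : Fin N, x k ≤ 2 * (d * Real.log (1 + N / lam)) := by
    calc ∑ k : Fin N, x k ≤ ∑ k : Fin N, 2 * Real.log (1 + x k) :=
          Finset.sum_le_sum (fun k _ => le_two_mul_log (hx0 k) (hx1 k))
      _ = 2 * ∑ k : Fin N, Real.log (1 + x k) := by rw [Finset.mul_sum]
      _ ≤ 2 * (d * Real.log (1 + N / lam)) := by linarith [hsumlog]
  -- Cauchy-Schwarz on the sum
  have hsum0 : 0 ≤ ∑ k : Fin N, x k := Finset.sum_nonneg fun k _ => hx0 k
  have hL2 : (∑ k, Real.sqrt (x k))^2 ≤ N * ∑ k, x k := by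
    have hcs := sq_sum_le_card_mul_sum_sq (s := (univ : Finset (Fin N)))
      (f := fun k => Real.sqrt (x k))
    have hrw : ∑ k : Fin N, (Real.sqrt (x k))^2 = ∑ k : Fin N, x k :=
      Finset.sum_congr rfl (fun k _ => Real.sq_sqrt (hx0 k))
    calc (∑ k, Real.sqrt (x k))^2
        ≤ ((univ : Finset (Fin N)).card : ℝ) * ∑ k : Fin N, (Real.sqrt (x k))^2 := hcs
      _ = N * ∑ k, x k := by rw [hrw, Finset.card_univ, Fintype.card_fin]
  rw [hgoal]
  have hnn : 0 ≤ ∑ k, Real.sqrt (x k) := Finset.sum_nonneg fun k _ => Real.sqrt_nonneg _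
  have hfin : (N : ℝ) * ∑ k, x k ≤ 2 * N * d * Real.log (1 + N / lam) := by
    calc (N : ℝ) * ∑ k, x k ≤ (N : ℝ) * (2 * (d * Real.log (1 + N / lam))) :=
          mul_le_mul_of_nonneg_left key (Nat.cast_nonneg N)
      _ = 2 * N * d * Real.log (1 + N / lam) := by ring
  calc ∑ k, Real.sqrt (x k) ≤ Real.sqrt ((N : ℝ) * ∑ k, x k) := by
        rw [Real.le_sqrt hnn (by positivity)]
        exact hL2
    _ ≤ Real.sqrt (2 * N * d * Real.log (1 + N / lam)) := Real.sqrt_le_sqrt hfin
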